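/- arXiv:1910.04667 — 4 statements merged into one kernel-verified Lean document; each statement's English description precedes it below -/
import Mathlib

section
/- Existence (Theorem 1, existence part): With F as above and R = {i : α_i > 0}, for any target demand D ∈ [∑_{i∈R} pmin_i + ∑_{j∉R} sat_j(p0_j), ∑_{i∈R} pmax_i + ∑_{j∉R} sat_j(p0_j)], there exists s ∈ ℝ with F(s) = D. -/
theorem totalOutput_existence {ι : Type*} [DecidableEq ι] (G : Finset ι) (hG : G.Nonempty)
    (pmin pmax p0 α : ι → ℝ)
    (hbd : ∀ i ∈ G, pmin i ≤ pmax i)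
    (hα : ∀ i ∈ G, 0 ≤ α i)
    (hsum : ∑ i ∈ G, α i = 1)
    (D : ℝ)
    (hD : D ∈ Set.Icc
      ((∑ i ∈ G.filter (fun i => 0 < α i), pmin i) +
        ∑ j ∈ G.filter (fun i => ¬ 0 < α i), max (pmin j) (min (p0 j) (pmax j)))
      ((∑ i ∈ G.filter (fun i => 0 < α i), pmax i) +
        ∑ j ∈ G.filter (fun i => ¬ 0 < α i), max (pmin j) (min (p0 j) (pmax j)))) :
    ∃ s : ℝ, ∑ i ∈ G, max (pmin i) (min (p0 i + α i * s) (pmax i)) = D := by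
  set F : ℝ → ℝ := fun s => ∑ i ∈ G, max (pmin i) (min (p0 i + α i * s) (pmax i)) with hF
  set M : ℝ := max (G.sup' hG fun i => max ((pmax i - p0 i) / α i) ((p0 i - pmin i) / α i)) 0
    with hM
  have hM0 : 0 ≤ M := le_max_right _ _
  have hMhi : ∀ i ∈ G, 0 < α i → pmax i ≤ p0 i + α i * M := by
    intro i hi hpos
    have h1 : (pmax i - p0 i) / α i ≤ M := by
      refine le_trans ?_ (le_max_left _ _)
      exact (Finset.le_sup' (fun i => max ((pmax i - p0 i) / α i) ((p0 i - pmin i) / α i))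
        hi).trans' (le_max_left _ _)
    have := (div_le_iff₀ hpos).mp h1
    linarith
  have hMlo : ∀ i ∈ G, 0 < α i → p0 i + α i * (-M) ≤ pmin i := by
    intro i hi hpos
    have h1 : (p0 i - pmin i) / α i ≤ M := by
      refine le_trans ?_ (le_max_left _ _)
      exact (Finset.le_sup' (fun i => max ((pmax i - p0 i) / α i) ((p0 i - pmin i) / α i))
        hi).trans' (le_max_right _ _)
    have := (div_le_iff₀ hpos).mp h1
    linarith
  have hzero : ∀ i ∈ G, ¬ 0 < α i → α i = 0 := fun i hi h => le_antisymm (not_lt.mp h) (hα i hi)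
  have hFlo : F (-M) = (∑ i ∈ G.filter (fun i => 0 < α i), pmin i) +
      ∑ j ∈ G.filter (fun i => ¬ 0 < α i), max (pmin j) (min (p0 j) (pmax j)) := by
    simp only [hF]
    rw [← Finset.sum_filter_add_sum_filter_not G (fun i => 0 < α i)]
    congr 1
    · refine Finset.sum_congr rfl fun i hi => ?_
      rw [Finset.mem_filter] at hi
      have h1 := hMlo i hi.1 hi.2
      have h2 := hbd i hi.1
      rw [min_eq_left (by linarith), max_eq_left (by linarith)]
    · refine Finset.sum_congr rfl fun i hi => ?_
      rw [Finset.mem_filter] at hi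
      rw [hzero i hi.1 hi.2]
      ring_nf
  have hFhi : F M = (∑ i ∈ G.filter (fun i => 0 < α i), pmax i) +
      ∑ j ∈ G.filter (fun i => ¬ 0 < α i), max (pmin j) (min (p0 j) (pmax j)) := by
    simp only [hF]
    rw [← Finset.sum_filter_add_sum_filter_not G (fun i => 0 < α i)]
    congr 1
    · refine Finset.sum_congr rfl fun i hi => ?_
      rw [Finset.mem_filter] at hi
      have h1 := hMhi i hi.1 hi.2
      have h2 := hbd i hi.1
      rw [min_eq_right (by linarith), max_eq_right (by linarith)]
    · refine Finset.sum_congr rfl fun i hi => ?_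
      rw [Finset.mem_filter] at hi
      rw [hzero i hi.1 hi.2]
      ring_nf
  have hcont : Continuous F := by
    apply continuous_finset_sum
    intro i _
    exact (continuous_const.max ((continuous_const.add
      (continuous_const.mul continuous_id)).min continuous_const))
  have hle : (-M : ℝ) ≤ M := by linarith
  have hsub := intermediate_value_Icc hle hcont.continuousOn
  have hDmem : D ∈ Set.Icc (F (-M)) (F M) := by rw [hFlo, hFhi]; exact hD
  obtain ⟨s, _, hs⟩ := hsub hDmem
  exact ⟨s, hs⟩
end

section
/- Uniqueness of outputs (Theorem 1, uniqueness of p): If s1, s2 ∈ ℝ both satisfy F(s1) = F(s2) = D, then for every i ∈ G, sat_i(p0_i + α_i s1) = sat_i(p0_i + α_i s2); i.e., although the slack s may not be unique, the individual generation levels p_i are unique. -/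
theorem totalOutput_unique_generation {ι : Type*} (G : Finset ι)
    (pmin pmax p0 α : ι → ℝ)
    (hbd : ∀ i ∈ G, pmin i ≤ pmax i)
    (hα : ∀ i ∈ G, 0 ≤ α i)
    (hsum : ∑ i ∈ G, α i = 1)
    (D s1 s2 : ℝ)
    (h1 : ∑ i ∈ G, max (pmin i) (min (p0 i + α i * s1) (pmax i)) = D)
    (h2 : ∑ i ∈ G, max (pmin i) (min (p0 i + α i * s2) (pmax i)) = D) :
    ∀ i ∈ G, max (pmin i) (min (p0 i + α i * s1) (pmax i)) =
      max (pmin i) (min (p0 i + α i * s2) (pmax i)) := by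
  wlog hle : s1 ≤ s2 with H
  · intro i hi
    exact (H G pmin pmax p0 α hbd hα hsum D s2 s1 h2 h1 (le_of_not_ge hle) i hi).symm
  have hmono : ∀ i ∈ G, max (pmin i) (min (p0 i + α i * s1) (pmax i)) ≤
      max (pmin i) (min (p0 i + α i * s2) (pmax i)) := by
    intro i hi
    have : p0 i + α i * s1 ≤ p0 i + α i * s2 := by
      have := mul_le_mul_of_nonneg_left hle (hα i hi); linarith
    exact max_le_max le_rfl (min_le_min this le_rfl)
  exact (Finset.sum_eq_sum_iff_of_le hmono).mp (h1.trans h2.symm)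
end

section
/- Nonuniqueness of slack at the boundary (Theorem 1, 'only if' direction): If D = ∑_{i∈R} pmax_i + ∑_{j∉R} sat_j(p0_j) (the right endpoint of the feasible interval), then every s ≥ max_{i∈R} (pmax_i - p0_i)/α_i satisfies F(s) = D; in particular the solution set for s is an unbounded interval, so s is not unique. -/
theorem slack_nonunique_at_boundary {ι : Type*} [DecidableEq ι] (G : Finset ι)
    (pmin pmax p0 α : ι → ℝ)
    (hbd : ∀ i ∈ G, pmin i ≤ pmax i)
    (hα : ∀ i ∈ G, 0 ≤ α i)
    (hsum : ∑ i ∈ G, α i = 1)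
    (D : ℝ)
    (hD : D = (∑ i ∈ G.filter (fun i => 0 < α i), pmax i) +
      ∑ j ∈ G.filter (fun i => ¬ 0 < α i), max (pmin j) (min (p0 j) (pmax j))) :
    ∀ s : ℝ, (∀ i ∈ G, 0 < α i → (pmax i - p0 i) / α i ≤ s) →
      ∑ i ∈ G, max (pmin i) (min (p0 i + α i * s) (pmax i)) = D := by
  intro s hs
  rw [hD, ← Finset.sum_filter_add_sum_filter_not G (fun i => 0 < α i)]
  congr 1
  · apply Finset.sum_congr rfl
    intro i hi
    simp only [Finset.mem_filter] at hi
    obtain ⟨hiG, hpos⟩ := hi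
    have h1 : pmax i ≤ p0 i + α i * s := by
      have := (div_le_iff₀ hpos).mp (hs i hiG hpos)
      linarith
    rw [min_eq_right h1, max_eq_right (hbd i hiG)]
  · apply Finset.sum_congr rfl
    intro i hi
    simp only [Finset.mem_filter] at hi
    obtain ⟨hiG, hneg⟩ := hi
    have h0 : α i = 0 := le_antisymm (not_lt.mp hneg) (hα i hiG)
    rw [h0]; ring_nf
end

section
/- Approximation error bound: for all x ∈ ℝ, |g_τ(x; L, U) − sat(x)| ≤ τ/4, where sat(x) = max(L, min(x, U)) is the exact saturation function. In particular g_τ converges uniformly to sat as τ → 0. -/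
/-- The smooth saturation function of the paper. -/
noncomputable def gSmooth (τ L U : ℝ) (x : ℝ) : ℝ :=
  if x < L - τ then L
  else if x ≤ L + τ then L + (x - (L - τ))^2 / (4 * τ)
  else if x < U - τ then x
  else if x ≤ U + τ then U - (x - (U + τ))^2 / (4 * τ)
  else U

lemma gSmooth_key (τ a : ℝ) (hτ : 0 < τ) (ha : a^2 ≤ τ^2) : |a^2 / (4 * τ)| ≤ τ / 4 := by
  rw [abs_div, abs_of_nonneg (sq_nonneg a), abs_of_pos (by linarith), div_le_iff₀ (by linarith)]
  nlinarith

lemma gSmooth_bound (L U τ : ℝ) (hτ : 0 < τ) (h : L + τ < U - τ) (x : ℝ) :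
    |gSmooth τ L U x - max L (min x U)| ≤ τ / 4 := by
  unfold gSmooth
  split_ifs with h1 h2 h3 h4
  · rw [min_eq_left (by linarith), max_eq_left (by linarith)]
    simp; positivity
  · push_neg at h1
    rw [min_eq_left (by linarith)]
    rcases le_total x L with hx | hx
    · rw [max_eq_left hx,
        show L + (x - (L - τ))^2 / (4*τ) - L = (x - (L - τ))^2 / (4*τ) by ring]
      exact gSmooth_key τ _ hτ (by nlinarith)
    · rw [max_eq_right hx,
        show L + (x - (L - τ))^2 / (4*τ) - x = (x - (L + τ))^2 / (4*τ) by field_simp; ring]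
      exact gSmooth_key τ _ hτ (by nlinarith)
  · push_neg at h2
    rw [min_eq_left (by linarith), max_eq_right (by linarith)]
    simp; positivity
  · push_neg at h3
    rcases le_total x U with hx | hx
    · rw [min_eq_left hx, max_eq_right (by linarith),
        show U - (x - (U + τ))^2 / (4*τ) - x = -((x - (U - τ))^2 / (4*τ)) by field_simp; ring,
        abs_neg]
      exact gSmooth_key τ _ hτ (by nlinarith)
    · rw [min_eq_right hx, max_eq_right (by linarith),
        show U - (x - (U + τ))^2 / (4*τ) - U = -((x - (U + τ))^2 / (4*τ)) by ring,
        abs_neg]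
      exact gSmooth_key τ _ hτ (by nlinarith)
  · push_neg at h4
    rw [min_eq_right (by linarith), max_eq_right (by linarith)]
    simp; positivity

theorem gSmooth_approx_error (L U : ℝ) (hLU : L < U) :
    (∀ τ : ℝ, 0 < τ → L + τ < U - τ →
      ∀ x : ℝ, |gSmooth τ L U x - max L (min x U)| ≤ τ / 4) ∧
    TendstoUniformly (fun (τ : ℝ) (x : ℝ) => gSmooth τ L U x)
      (fun x => max L (min x U)) (nhdsWithin 0 (Set.Ioi 0)) := by
  refine ⟨fun τ hτ h x => gSmooth_bound L U τ hτ h x, ?_⟩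
  rw [Metric.tendstoUniformly_iff]
  intro ε hε
  have hδ : (0:ℝ) < min ((U - L) / 2) (4 * ε) := by
    apply lt_min <;> linarith
  have hmem : Set.Ioo (0:ℝ) (min ((U - L) / 2) (4 * ε)) ∈ nhdsWithin 0 (Set.Ioi 0) :=
    Ioo_mem_nhdsGT_of_mem (by constructor <;> simp [hδ])
  filter_upwards [hmem] with τ hτ x
  obtain ⟨hτ0, hτδ⟩ := hτ
  have h1 : τ < (U - L) / 2 := lt_of_lt_of_le hτδ (min_le_left _ _)
  have h2 : τ < 4 * ε := lt_of_lt_of_le hτδ (min_le_right _ _)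
  have := gSmooth_bound L U τ hτ0 (by linarith) x
  rw [Real.dist_eq, abs_sub_comm]
  linarith
end
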